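/- arXiv:2003.10468 — 4 statements merged into one kernel-verified Lean document; each statement's English description precedes it below -/
import Mathlib

section
/- Let a > 0 and define p(x,y) = sinh(2y) sin(2x) / (2 sinh(2a) [2 + coth(2a)]) on ℝ². Then: (i) p is harmonic, i.e. ∂²p/∂x² + ∂²p/∂y² = 0 at every point; (ii) p(0,y) = 0, p(π,y) = 0 for 0 < y < a and p(x,0) = 0 for 0 < x < π; and (iii) setting P(x) = p(x,a), for every x ∈ (0,π) one has −P''(x) + ∂p/∂y(x,a) = sin(2x). -/
noncomputable def coth (t : ℝ) : ℝ := Real.cosh t / Real.sinh t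

lemma hds (x : ℝ) : HasDerivAt (fun x' => Real.sin (2*x')) (2 * Real.cos (2*x)) x := by
  have h := (Real.hasDerivAt_sin (2*x)).comp x ((hasDerivAt_id x).const_mul 2)
  simp only [Function.comp_def, mul_one] at h
  exact (mul_comm (Real.cos (2*x)) 2) ▸ h

lemma hdc (x : ℝ) : HasDerivAt (fun x' => Real.cos (2*x')) (-(2 * Real.sin (2*x))) x := by
  have h := (Real.hasDerivAt_cos (2*x)).comp x ((hasDerivAt_id x).const_mul 2)
  simp only [Function.comp_def, mul_one] at h
  have h2 : -Real.sin (2*x) * 2 = -(2 * Real.sin (2*x)) := by ring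
  exact h2 ▸ h

lemma hdsh (x : ℝ) : HasDerivAt (fun x' => Real.sinh (2*x')) (2 * Real.cosh (2*x)) x := by
  have h := (Real.hasDerivAt_sinh (2*x)).comp x ((hasDerivAt_id x).const_mul 2)
  simp only [Function.comp_def, mul_one] at h
  exact (mul_comm (Real.cosh (2*x)) 2) ▸ h

lemma hdch (x : ℝ) : HasDerivAt (fun x' => Real.cosh (2*x')) (2 * Real.sinh (2*x)) x := by
  have h := (Real.hasDerivAt_cosh (2*x)).comp x ((hasDerivAt_id x).const_mul 2)
  simp only [Function.comp_def, mul_one] at h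
  exact (mul_comm (Real.sinh (2*x)) 2) ▸ h

/-- `p(x,y) = sinh(2y) sin(2x) / (2 sinh(2a)[2 + coth(2a)])` is harmonic,
vanishes on the sides `x = 0`, `x = π`, `y = 0`, and `P(x) = p(x,a)` satisfies the
linearized Reynolds boundary condition `−P''(x) + p_y(x,a) = sin(2x)` on `(0,π)`. -/
theorem porous_matrix_pressure (a : ℝ) (ha : 0 < a) (p : ℝ → ℝ → ℝ)
    (hp : ∀ x y : ℝ, p x y = Real.sinh (2 * y) * Real.sin (2 * x)
      / (2 * Real.sinh (2 * a) * (2 + coth (2 * a)))) :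
    (∀ x y : ℝ,
        deriv (fun x' => deriv (fun x'' => p x'' y) x') x
          + deriv (fun y' => deriv (fun y'' => p x y'') y') y = 0) ∧
      (∀ y : ℝ, 0 < y → y < a → p 0 y = 0) ∧
      (∀ y : ℝ, 0 < y → y < a → p Real.pi y = 0) ∧
      (∀ x : ℝ, 0 < x → x < Real.pi → p x 0 = 0) ∧
      (∀ x : ℝ, 0 < x → x < Real.pi →
        -deriv (deriv (fun x' => p x' a)) x + deriv (fun y' => p x y') a
          = Real.sin (2 * x)) := by
  have hpe : p = fun x y => Real.sinh (2 * y) * Real.sin (2 * x)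
      / (2 * Real.sinh (2 * a) * (2 + coth (2 * a))) := by
    funext x y; exact hp x y
  subst hpe
  set C : ℝ := 2 * Real.sinh (2 * a) * (2 + coth (2 * a)) with hCdef
  have hsh : Real.sinh (2*a) > 0 := Real.sinh_pos_iff.2 (by linarith)
  have hC : C = 4 * Real.sinh (2*a) + 2 * Real.cosh (2*a) := by
    rw [hCdef, coth]; field_simp; ring
  have hCpos : 0 < C := by
    rw [hC]; have := Real.cosh_pos (x := 2*a); linarith
  -- derivative in x of p(·,y)
  have dx1 : ∀ x y : ℝ, deriv (fun x'' => Real.sinh (2*y) * Real.sin (2*x'') / C) x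
      = Real.sinh (2*y) * (2 * Real.cos (2*x)) / C := by
    intro x y
    have : HasDerivAt (fun x'' => Real.sinh (2*y) * Real.sin (2*x'') / C)
        (Real.sinh (2*y) * (2 * Real.cos (2*x)) / C) x :=
      (((hds x).const_mul (Real.sinh (2*y)))).div_const C
    exact this.deriv
  have dx2 : ∀ x y : ℝ, deriv (fun x' => deriv (fun x'' => Real.sinh (2*y) * Real.sin (2*x'') / C) x') x
      = Real.sinh (2*y) * (2 * (-(2 * Real.sin (2*x)))) / C := by
    intro x y
    have he : (fun x' => deriv (fun x'' => Real.sinh (2*y) * Real.sin (2*x'') / C) x')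
        = fun x' => Real.sinh (2*y) * (2 * Real.cos (2*x')) / C := by
      funext x'; exact dx1 x' y
    rw [he]
    have : HasDerivAt (fun x' => Real.sinh (2*y) * (2 * Real.cos (2*x')) / C)
        (Real.sinh (2*y) * (2 * (-(2 * Real.sin (2*x)))) / C) x :=
      ((((hdc x).const_mul (2:ℝ)).const_mul (Real.sinh (2*y)))).div_const C
    exact this.deriv
  have dy1 : ∀ x y : ℝ, deriv (fun y'' => Real.sinh (2*y'') * Real.sin (2*x) / C) y
      = 2 * Real.cosh (2*y) * Real.sin (2*x) / C := by
    intro x y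
    have : HasDerivAt (fun y'' => Real.sinh (2*y'') * Real.sin (2*x) / C)
        (2 * Real.cosh (2*y) * Real.sin (2*x) / C) y :=
      ((hdsh y).mul_const (Real.sin (2*x))).div_const C
    exact this.deriv
  have dy2 : ∀ x y : ℝ, deriv (fun y' => deriv (fun y'' => Real.sinh (2*y'') * Real.sin (2*x) / C) y') y
      = 2 * (2 * Real.sinh (2*y)) * Real.sin (2*x) / C := by
    intro x y
    have he : (fun y' => deriv (fun y'' => Real.sinh (2*y'') * Real.sin (2*x) / C) y')
        = fun y' => 2 * Real.cosh (2*y') * Real.sin (2*x) / C := by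
      funext y'; exact dy1 x y'
    rw [he]
    have : HasDerivAt (fun y' => 2 * Real.cosh (2*y') * Real.sin (2*x) / C)
        (2 * (2 * Real.sinh (2*y)) * Real.sin (2*x) / C) y :=
      (((hdch y).const_mul (2:ℝ)).mul_const (Real.sin (2*x))).div_const C
    exact this.deriv
  refine ⟨?_, ?_, ?_, ?_, ?_⟩
  · intro x y
    rw [dx2 x y, dy2 x y]; ring
  · intro y _ _; simp
  · intro y _ _; simp [Real.sin_pi]
  · intro x _ _; simp
  · intro x _ _
    have h1 : deriv (deriv (fun x' => Real.sinh (2*a) * Real.sin (2*x') / C)) x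
        = Real.sinh (2*a) * (2 * (-(2 * Real.sin (2*x)))) / C := by
      have he : deriv (fun x' => Real.sinh (2*a) * Real.sin (2*x') / C)
          = fun x' => deriv (fun x'' => Real.sinh (2*a) * Real.sin (2*x'') / C) x' := rfl
      rw [he]; exact dx2 x a
    rw [h1, dy1 x a]
    rw [hC] at *
    have hden : 4 * Real.sinh (2*a) + 2 * Real.cosh (2*a) ≠ 0 := ne_of_gt hCpos
    field_simp
    ring
end

section
/- There exists a unique ξ̄ ∈ (0, L) such that F(ξ̄) = 0, and moreover L/2 < ξ̄ < L. -/
open intervalIntegral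

/-- for `f` continuous on `[0,L]`, positive on `[0,L/2)`, negative on
`(L/2,L]` and antisymmetric about `L/2`, the function `F(ξ) = ∫₀^ξ z f(z) dz` has a
unique zero `ξ̄` in `(0,L)`, and moreover `L/2 < ξ̄ < L`. -/
theorem unique_zero_of_F (L : ℝ) (hL : 0 < L) (f : ℝ → ℝ)
    (hf : ContinuousOn f (Set.Icc 0 L))
    (hpos : ∀ x, 0 ≤ x → x < L / 2 → 0 < f x)
    (hneg : ∀ x, L / 2 < x → x ≤ L → f x < 0)
    (hanti : ∀ x ∈ Set.Icc (0 : ℝ) L, f (L - x) = -f x) :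
    (∃! ξ : ℝ, ξ ∈ Set.Ioo (0 : ℝ) L ∧ (∫ z in (0:ℝ)..ξ, z * f z) = 0) ∧
      (∀ ξ : ℝ, ξ ∈ Set.Ioo (0 : ℝ) L → (∫ z in (0:ℝ)..ξ, z * f z) = 0 →
        L / 2 < ξ ∧ ξ < L) := by
  have hL2 : 0 < L / 2 := by linarith
  set g : ℝ → ℝ := fun z => z * f z with hg
  have hgc : ContinuousOn g (Set.Icc 0 L) := continuousOn_id.mul hf
  have hint : ∀ a b : ℝ, a ∈ Set.Icc (0:ℝ) L → b ∈ Set.Icc (0:ℝ) L →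
      IntervalIntegrable g MeasureTheory.volume a b := by
    intro a b ha hb
    exact (hgc.mono (Set.uIcc_subset_Icc ha hb)).intervalIntegrable
  set F : ℝ → ℝ := fun ξ => ∫ z in (0:ℝ)..ξ, g z with hF
  -- strict increase on [0, L/2]
  have hmono : ∀ a b : ℝ, 0 ≤ a → a < b → b ≤ L / 2 → F a < F b := by
    intro a b ha hab hb
    have ha' : a ∈ Set.Icc (0:ℝ) L := ⟨ha, by linarith⟩
    have hb' : b ∈ Set.Icc (0:ℝ) L := ⟨by linarith, by linarith⟩
    have h0 : (0:ℝ) ∈ Set.Icc (0:ℝ) L := ⟨le_rfl, le_of_lt hL⟩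
    have hpos' : 0 < ∫ z in a..b, g z := by
      apply intervalIntegral.intervalIntegral_pos_of_pos_on (hint a b ha' hb') _ hab
      intro x hx
      exact mul_pos (lt_of_le_of_lt ha hx.1) (hpos x (le_of_lt (lt_of_le_of_lt ha hx.1))
        (lt_of_lt_of_le hx.2 hb))
    have hadd : F a + ∫ z in a..b, g z = F b :=
      intervalIntegral.integral_add_adjacent_intervals (hint 0 a h0 ha') (hint a b ha' hb')
    linarith
  -- strict decrease on [L/2, L]
  have hanti' : ∀ a b : ℝ, L / 2 ≤ a → a < b → b ≤ L → F b < F a := by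
    intro a b ha hab hb
    have ha' : a ∈ Set.Icc (0:ℝ) L := ⟨by linarith, by linarith⟩
    have hb' : b ∈ Set.Icc (0:ℝ) L := ⟨by linarith, hb⟩
    have h0 : (0:ℝ) ∈ Set.Icc (0:ℝ) L := ⟨le_rfl, le_of_lt hL⟩
    have hneg' : (∫ z in a..b, g z) < 0 := by
      have : 0 < ∫ z in a..b, (fun z => -g z) z := by
        apply intervalIntegral.intervalIntegral_pos_of_pos_on ((hint a b ha' hb').neg) _ hab
        intro x hx
        have hx1 : L / 2 < x := lt_of_le_of_lt ha hx.1
        have := hneg x hx1 (le_of_lt (lt_of_lt_of_le hx.2 hb))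
        have hx0 : 0 < x := lt_trans hL2 hx1
        show (0:ℝ) < -(x * f x)
        exact neg_pos.mpr (mul_neg_of_pos_of_neg hx0 this)
      rw [intervalIntegral.integral_neg] at this
      linarith
    have hadd : F a + ∫ z in a..b, g z = F b :=
      intervalIntegral.integral_add_adjacent_intervals (hint 0 a h0 ha') (hint a b ha' hb')
    linarith
  -- F (L/2) > 0
  have hFhalf : 0 < F (L / 2) := by
    have := hmono 0 (L / 2) le_rfl hL2 le_rfl
    simpa [hF] using this
  -- F L < 0
  have hFL : F L < 0 := by
    have h0 : (0:ℝ) ∈ Set.Icc (0:ℝ) L := ⟨le_rfl, le_of_lt hL⟩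
    have hhalf : (L/2 : ℝ) ∈ Set.Icc (0:ℝ) L := ⟨le_of_lt hL2, by linarith⟩
    have hLm : (L : ℝ) ∈ Set.Icc (0:ℝ) L := ⟨le_of_lt hL, le_rfl⟩
    -- second half integral via substitution
    have hsub : (∫ z in (L/2)..L, g z) = ∫ u in (0:ℝ)..(L/2), g (L - u) := by
      rw [intervalIntegral.integral_comp_sub_left g L, show L - L/2 = L/2 by ring, sub_zero]
    have hcong : (∫ u in (0:ℝ)..(L/2), g (L - u)) =
        ∫ u in (0:ℝ)..(L/2), -((L - u) * f u) := by
      apply intervalIntegral.integral_congr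
      intro u hu
      rw [Set.uIcc_of_le (le_of_lt hL2)] at hu
      have hu' : u ∈ Set.Icc (0:ℝ) L := ⟨hu.1, by linarith [hu.2]⟩
      simp only [hg]
      rw [hanti u hu']
      ring
    have hint2 : IntervalIntegrable (fun u => (L - u) * f u) MeasureTheory.volume 0 (L/2) := by
      apply ContinuousOn.intervalIntegrable
      apply ContinuousOn.mono _ (Set.uIcc_subset_Icc h0 hhalf)
      exact (continuousOn_const.sub continuousOn_id).mul hf
    have hsplit : F (L/2) + (∫ z in (L/2)..L, g z) = F L :=
      intervalIntegral.integral_add_adjacent_intervals (hint 0 (L/2) h0 hhalf)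
        (hint (L/2) L hhalf hLm)
    have hFLe : F L = ∫ u in (0:ℝ)..(L/2), (g u - (L - u) * f u) := by
      rw [intervalIntegral.integral_sub (hint 0 (L/2) h0 hhalf) hint2]
      rw [← hsplit, hsub, hcong, intervalIntegral.integral_neg]
      ring
    have hcong2 : (∫ u in (0:ℝ)..(L/2), (g u - (L - u) * f u)) =
        ∫ u in (0:ℝ)..(L/2), (2 * u - L) * f u := by
      apply intervalIntegral.integral_congr
      intro u _
      simp only [hg]
      ring
    have hneg3 : (∫ u in (0:ℝ)..(L/2), (2 * u - L) * f u) < 0 := by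
      have hint3 : IntervalIntegrable (fun u => (2 * u - L) * f u) MeasureTheory.volume 0 (L/2) := by
        apply ContinuousOn.intervalIntegrable
        apply ContinuousOn.mono _ (Set.uIcc_subset_Icc h0 hhalf)
        exact ((continuousOn_const.mul continuousOn_id).sub continuousOn_const).mul hf
      have : 0 < ∫ u in (0:ℝ)..(L/2), (fun u => -((2 * u - L) * f u)) u := by
        apply intervalIntegral.intervalIntegral_pos_of_pos_on hint3.neg _ hL2
        intro x hx
        have := hpos x (le_of_lt hx.1) hx.2
        have h2 : 2 * x - L < 0 := by linarith [hx.2]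
        show (0:ℝ) < -((2 * x - L) * f x)
        exact neg_pos.mpr (mul_neg_of_neg_of_pos h2 this)
      rw [intervalIntegral.integral_neg] at this
      linarith
    rw [hFLe, hcong2]
    exact hneg3
  -- continuity of F
  have hFc : ContinuousOn F (Set.Icc (L/2) L) := by
    have h0 : (0:ℝ) ∈ Set.uIcc (0:ℝ) L := Set.left_mem_uIcc
    have := intervalIntegral.continuousOn_primitive_interval'
      (μ := MeasureTheory.volume) (hint 0 L ⟨le_rfl, le_of_lt hL⟩ ⟨le_of_lt hL, le_rfl⟩) h0
    apply this.mono
    rw [Set.uIcc_of_le (le_of_lt hL)]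
    exact Set.Icc_subset_Icc (le_of_lt hL2) le_rfl
  -- existence of zero in (L/2, L)
  obtain ⟨ξ, hξmem, hξzero⟩ : ∃ ξ ∈ Set.Ioo (L/2) L, F ξ = 0 := by
    have h0mem : (0:ℝ) ∈ Set.Ioo (F L) (F (L/2)) := ⟨hFL, hFhalf⟩
    have := intermediate_value_Ioo' (le_of_lt (by linarith : L/2 < L)) hFc h0mem
    obtain ⟨ξ, hξ, hξ0⟩ := this
    exact ⟨ξ, hξ, hξ0⟩
  -- every zero in (0,L) lies in (L/2, L)
  have hloc : ∀ ζ : ℝ, ζ ∈ Set.Ioo (0:ℝ) L → F ζ = 0 → L / 2 < ζ ∧ ζ < L := by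
    intro ζ hζ hζ0
    refine ⟨?_, hζ.2⟩
    by_contra h
    push_neg at h
    have h1 : F 0 = 0 := by simp [hF]
    have h2 : F 0 < F ζ := hmono 0 ζ le_rfl hζ.1 h
    rw [h1, hζ0] at h2
    exact lt_irrefl 0 h2
  -- uniqueness
  have huniq : ∀ ζ : ℝ, ζ ∈ Set.Ioo (0:ℝ) L → F ζ = 0 → ζ = ξ := by
    intro ζ hζ hζ0
    obtain ⟨hζhalf, hζL⟩ := hloc ζ hζ hζ0
    rcases lt_trichotomy ζ ξ with h | h | h
    · have := hanti' ζ ξ (le_of_lt hζhalf) h (le_of_lt hξmem.2)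
      rw [hζ0, hξzero] at this; exact absurd this (lt_irrefl 0)
    · exact h
    · have := hanti' ξ ζ (le_of_lt hξmem.1) h (le_of_lt hζL)
      rw [hζ0, hξzero] at this; exact absurd this (lt_irrefl 0)
  constructor
  · refine ⟨ξ, ⟨⟨lt_trans hL2 hξmem.1, hξmem.2⟩, hξzero⟩, ?_⟩
    intro ζ hζ
    exact huniq ζ hζ.1 hζ.2
  · intro ζ hζ hζ0
    exact hloc ζ hζ hζ0
end

section
/- The function u(x) = x ∫₀^{ξ̄} f(t) dt − ∫₀^x (x − z) f(z) dz satisfies u(x) > 0 for every x ∈ (0, ξ̄). -/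
open intervalIntegral

/-- the function `u(x) = x ∫₀^{ξ̄} f − ∫₀^x (x−z) f(z) dz` is positive
on `(0, ξ̄)`. -/
theorem solution_positive (L : ℝ) (hL : 0 < L) (f : ℝ → ℝ)
    (hf : ContinuousOn f (Set.Icc 0 L))
    (hpos : ∀ x, 0 ≤ x → x < L / 2 → 0 < f x)
    (hneg : ∀ x, L / 2 < x → x ≤ L → f x < 0)
    (hanti : ∀ x ∈ Set.Icc (0 : ℝ) L, f (L - x) = -f x)
    (ξ : ℝ) (hξ : ξ ∈ Set.Ioo (L / 2) L)
    (hF : (∫ z in (0:ℝ)..ξ, z * f z) = 0)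
    (u : ℝ → ℝ)
    (hu : ∀ x : ℝ, u x = x * (∫ t in (0:ℝ)..ξ, f t) - ∫ z in (0:ℝ)..x, (x - z) * f z) :
    ∀ x : ℝ, 0 < x → x < ξ → 0 < u x := by
  intro x hx0 hxξ
  obtain ⟨hξc, hξL⟩ := hξ
  have hc : (0:ℝ) < L / 2 := by linarith
  have hξ0 : (0:ℝ) < ξ := by linarith
  have hxL : x < L := lt_trans hxξ hξL
  set c : ℝ := L / 2 with hcdef
  -- f (L/2) = 0
  have hfc : f c = 0 := by
    have h := hanti c ⟨by linarith, by linarith⟩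
    have h2 : L - c = c := by rw [hcdef]; ring
    rw [h2] at h
    linarith
  -- integrability helper
  have hI : ∀ (g : ℝ → ℝ), ContinuousOn g (Set.Icc 0 L) → ∀ a b : ℝ, 0 ≤ a → a ≤ L →
      0 ≤ b → b ≤ L → IntervalIntegrable g MeasureTheory.volume a b := by
    intro g hg a b ha haL hb hbL
    apply (hg.mono ?_).intervalIntegrable
    intro t ht
    rcases Set.mem_uIcc.mp ht with h | h <;> exact ⟨by linarith [h.1], by linarith [h.2]⟩
  have hzfC : ContinuousOn (fun z => z * f z) (Set.Icc 0 L) :=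
    continuous_id.continuousOn.mul hf
  have hcfC : ContinuousOn (fun z => (c - z) * f z) (Set.Icc 0 L) :=
    ((continuous_const.sub continuous_id).continuousOn).mul hf
  -- expansion lemma
  have expand : ∀ (k a b : ℝ), 0 ≤ a → a ≤ L → 0 ≤ b → b ≤ L →
      (∫ z in a..b, (k - z) * f z)
        = k * (∫ z in a..b, f z) - ∫ z in a..b, z * f z := by
    intro k a b ha haL hb hbL
    have h1 : IntervalIntegrable (fun z => k * f z) MeasureTheory.volume a b :=
      (hI f hf a b ha haL hb hbL).const_mul k
    have h2 := hI _ hzfC a b ha haL hb hbL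
    simp only [sub_mul]
    rw [intervalIntegral.integral_sub h1 h2, intervalIntegral.integral_const_mul]
  -- adjacent intervals for z*f
  have hadd : (∫ z in (0:ℝ)..x, z * f z) + (∫ z in x..ξ, z * f z) = 0 := by
    rw [intervalIntegral.integral_add_adjacent_intervals
      (hI _ hzfC 0 x le_rfl hL.le hx0.le hxL.le)
      (hI _ hzfC x ξ hx0.le hxL.le hξ0.le hξL.le)]
    exact hF
  have haddf : (∫ z in (0:ℝ)..x, f z) + (∫ z in x..ξ, f z) = ∫ z in (0:ℝ)..ξ, f z := by
    rw [intervalIntegral.integral_add_adjacent_intervals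
      (hI f hf 0 x le_rfl hL.le hx0.le hxL.le)
      (hI f hf x ξ hx0.le hxL.le hξ0.le hξL.le)]
  -- rewrite u x
  have hux : u x = x * (∫ z in x..ξ, f z) + ∫ z in (0:ℝ)..x, z * f z := by
    rw [hu x, expand x 0 x le_rfl hL.le hx0.le hxL.le]
    nlinarith [haddf]
  set S : ℝ := ∫ z in x..ξ, f z with hSdef
  set I1 : ℝ := ∫ z in (0:ℝ)..x, z * f z with hI1def
  rcases le_or_gt x c with hxc | hxc
  · -- case x ≤ L/2
    have hI1pos : 0 < I1 := by
      apply intervalIntegral.intervalIntegral_pos_of_pos_on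
        (hI _ hzfC 0 x le_rfl hL.le hx0.le hxL.le) _ hx0
      intro z hz
      exact mul_pos hz.1 (hpos z hz.1.le (lt_of_lt_of_le hz.2 hxc))
    have hI2 : 0 ≤ ∫ z in x..c, (c - z) * f z := by
      apply intervalIntegral.integral_nonneg hxc
      intro z hz
      have hfz : 0 ≤ f z := by
        rcases eq_or_lt_of_le hz.2 with h | h
        · rw [h, hfc]
        · exact (hpos z (by linarith [hz.1]) h).le
      exact mul_nonneg (by linarith [hz.2]) hfz
    have hI3 : 0 < ∫ z in c..ξ, (c - z) * f z := by
      apply intervalIntegral.intervalIntegral_pos_of_pos_on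
        (hI _ hcfC c ξ hc.le (by linarith) hξ0.le hξL.le) _ hξc
      intro z hz
      exact mul_pos_of_neg_of_neg (by linarith [hz.1]) (hneg z hz.1 (by linarith [hz.2]))
    have hsplit : (∫ z in x..c, (c - z) * f z) + (∫ z in c..ξ, (c - z) * f z)
        = ∫ z in x..ξ, (c - z) * f z := by
      rw [intervalIntegral.integral_add_adjacent_intervals
        (hI _ hcfC x c hx0.le hxL.le hc.le (by linarith))
        (hI _ hcfC c ξ hc.le (by linarith) hξ0.le hξL.le)]
    have hexp : (∫ z in x..ξ, (c - z) * f z) = c * S - ∫ z in x..ξ, z * f z :=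
      expand c x ξ hx0.le hxL.le hξ0.le hξL.le
    -- c * S = (I2 + I3) - I1
    have hkey : c * S = ((∫ z in x..c, (c - z) * f z) + (∫ z in c..ξ, (c - z) * f z)) - I1 := by
      rw [hsplit, hexp]
      have : (∫ z in x..ξ, z * f z) = -I1 := by linarith [hadd]
      rw [this]; ring
    -- c * u x = x*(I2+I3) + (c-x)*I1 > 0
    have : c * u x = x * ((∫ z in x..c, (c - z) * f z) + (∫ z in c..ξ, (c - z) * f z))
        + (c - x) * I1 := by rw [hux]; nlinarith [hkey]
    nlinarith [mul_pos hx0 hI3, mul_nonneg hx0.le hI2, mul_nonneg (by linarith : (0:ℝ) ≤ c - x) hI1pos.le]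
  · -- case L/2 < x
    have hxfC : ContinuousOn (fun z => (x - z) * f z) (Set.Icc 0 L) :=
      ((continuous_const.sub continuous_id).continuousOn).mul hf
    have hpos2 : 0 < ∫ z in x..ξ, (x - z) * f z := by
      apply intervalIntegral.intervalIntegral_pos_of_pos_on
        (hI _ hxfC x ξ hx0.le hxL.le hξ0.le hξL.le) _ hxξ
      intro z hz
      exact mul_pos_of_neg_of_neg (by linarith [hz.1])
        (hneg z (lt_trans hxc hz.1) (by linarith [hz.2]))
    have hexp : (∫ z in x..ξ, (x - z) * f z) = x * S - ∫ z in x..ξ, z * f z :=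
      expand x x ξ hx0.le hxL.le hξ0.le hξL.le
    have : (∫ z in x..ξ, z * f z) = -I1 := by linarith [hadd]
    rw [this] at hexp
    rw [hux]
    linarith [hpos2, hexp]
end

section
/- Define ū : [0,L] → ℝ by ū(x) = u(x) for x ∈ [0, ξ̄) and ū(x) = 0 for x ∈ [ξ̄, L], and D : [0,L] → ℝ by D(x) = u'(x) for x ∈ [0, ξ̄) and D(x) = 0 for x ∈ [ξ̄, L] (so D is the derivative of ū, which is continuously differentiable since u(ξ̄) = u'(ξ̄) = 0). Then ū solves the variational inequality: for every continuously differentiable v : [0,L] → ℝ with v(0) = 0, v(L) = 0 and v(x) ≥ 0 on [0,L], one has ∫₀^L D(x)(v'(x) − D(x)) dx ≥ ∫₀^L f(x)(v(x) − ū(x)) dx. -/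
open intervalIntegral

/-- the truncated solution `ū` (equal to `u` on `[0,ξ̄)` and to `0` on
`[ξ̄,L]`), with derivative `D` (equal to `u'` on `[0,ξ̄)` and to `0` on `[ξ̄,L]`),
solves the variational inequality of the cavitated long bearing: for every
continuously differentiable `v` with `v(0) = v(L) = 0` and `v ≥ 0` on `[0,L]`,
`∫₀^L D (v' − D) ≥ ∫₀^L f (v − ū)`. -/
theorem truncated_solution_solves_variational_inequality
    (L : ℝ) (hL : 0 < L) (f : ℝ → ℝ)
    (hf : ContinuousOn f (Set.Icc 0 L))
    (hpos : ∀ x, 0 ≤ x → x < L / 2 → 0 < f x)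
    (hneg : ∀ x, L / 2 < x → x ≤ L → f x < 0)
    (hanti : ∀ x ∈ Set.Icc (0 : ℝ) L, f (L - x) = -f x)
    (ξ : ℝ) (hξ : ξ ∈ Set.Ioo (L / 2) L)
    (hF : (∫ z in (0:ℝ)..ξ, z * f z) = 0)
    (u : ℝ → ℝ)
    (hu : ∀ x : ℝ, u x = x * (∫ t in (0:ℝ)..ξ, f t) - ∫ z in (0:ℝ)..x, (x - z) * f z)
    (ubar D : ℝ → ℝ)
    (hubar : ∀ x : ℝ, ubar x = if x < ξ then u x else 0)
    (hD : ∀ x : ℝ, D x = if x < ξ then deriv u x else 0) :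
    ∀ v v' : ℝ → ℝ,
      (∀ x ∈ Set.Icc (0 : ℝ) L, HasDerivWithinAt v (v' x) (Set.Icc (0 : ℝ) L) x) →
      ContinuousOn v' (Set.Icc 0 L) →
      v 0 = 0 → v L = 0 → (∀ x ∈ Set.Icc (0 : ℝ) L, 0 ≤ v x) →
      (∫ x in (0:ℝ)..L, D x * (v' x - D x)) ≥ ∫ x in (0:ℝ)..L, f x * (v x - ubar x) := by
  intro v v' hv hv' hv0 hvL hvpos
  obtain ⟨hξhalf, hξL⟩ := hξ
  have hξ0 : 0 < ξ := lt_of_le_of_lt (by linarith : (0:ℝ) ≤ L/2) hξhalf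
  set G : ℝ → ℝ := fun x => ∫ t in (0:ℝ)..x, f t with hGdef
  set H : ℝ → ℝ := fun x => ∫ z in (0:ℝ)..x, z * f z with hHdef
  have hC : ∀ x : ℝ, u x = x * G ξ - ∫ z in (0:ℝ)..x, (x - z) * f z := hu
  set C : ℝ := G ξ with hCdef
  -- basic integrability and continuity
  have hfI : MeasureTheory.IntegrableOn f (Set.Icc 0 L) := hf.integrableOn_Icc
  have hgI : ContinuousOn (fun z => z * f z) (Set.Icc 0 L) := continuousOn_id.mul hf
  have hfi : ∀ x ∈ Set.Icc (0:ℝ) L, IntervalIntegrable f MeasureTheory.volume 0 x := fun x hx =>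
    (hf.mono (Set.Icc_subset_Icc le_rfl hx.2)).intervalIntegrable_of_Icc hx.1
  have hgi : ∀ x ∈ Set.Icc (0:ℝ) L, IntervalIntegrable (fun z => z * f z)
      MeasureTheory.volume 0 x := fun x hx =>
    ((hgI.mono (Set.Icc_subset_Icc le_rfl hx.2))).intervalIntegrable_of_Icc hx.1
  have hGcont : ContinuousOn G (Set.Icc 0 L) := by
    have := intervalIntegral.continuousOn_primitive_interval
      (a := (0:ℝ)) (b := L) (μ := MeasureTheory.volume) (f := f)
      (by rwa [Set.uIcc_of_le hL.le])
    rwa [Set.uIcc_of_le hL.le] at this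
  have hHcont : ContinuousOn H (Set.Icc 0 L) := by
    have := intervalIntegral.continuousOn_primitive_interval
      (a := (0:ℝ)) (b := L) (μ := MeasureTheory.volume) (f := fun z => z * f z)
      (by rw [Set.uIcc_of_le hL.le]; exact hgI.integrableOn_Icc)
    rwa [Set.uIcc_of_le hL.le] at this
  have hG' : ∀ x ∈ Set.Ioo (0:ℝ) L, HasDerivAt G (f x) x := fun x hx =>
    intervalIntegral.integral_hasDerivAt_right (hfi x (Set.Ioo_subset_Icc_self hx))
      (ContinuousOn.stronglyMeasurableAtFilter isOpen_Ioo
        (hf.mono Set.Ioo_subset_Icc_self) x hx)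
      (hf.continuousAt (Icc_mem_nhds hx.1 hx.2))
  have hH' : ∀ x ∈ Set.Ioo (0:ℝ) L, HasDerivAt H (x * f x) x := fun x hx =>
    intervalIntegral.integral_hasDerivAt_right (hgi x (Set.Ioo_subset_Icc_self hx))
      (ContinuousOn.stronglyMeasurableAtFilter isOpen_Ioo
        (hgI.mono Set.Ioo_subset_Icc_self) x hx)
      (hgI.continuousAt (Icc_mem_nhds hx.1 hx.2))
  -- key formula for u
  have key : ∀ x ∈ Set.Icc (0:ℝ) L, u x = x * C - x * G x + H x := by
    intro x hx
    rw [hC]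
    have e1 : ∀ z, (x - z) * f z = x * f z - z * f z := fun z => by ring
    have e2 : (∫ z in (0:ℝ)..x, (x - z) * f z) = x * G x - H x := by
      simp_rw [e1]
      rw [intervalIntegral.integral_sub ((hfi x hx).const_mul x) (hgi x hx),
        intervalIntegral.integral_const_mul]
    rw [e2]; ring
  set w : ℝ → ℝ := fun x => C - G x with hwdef
  have hwξ : w ξ = 0 := by simp [hwdef, hCdef]
  have hu0 : u 0 = 0 := by rw [hu]; simp
  have huξ : u ξ = 0 := by
    rw [key ξ ⟨hξ0.le, hξL.le⟩]
    have : H ξ = 0 := hF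
    rw [this, ← hCdef]; ring
  have hwcont : ContinuousOn w (Set.Icc 0 L) := continuousOn_const.sub hGcont
  have hw' : ∀ x ∈ Set.Ioo (0:ℝ) L, HasDerivAt w (-(f x)) x := by
    intro x hx
    have := (hasDerivAt_const x C).sub (hG' x hx)
    rw [zero_sub] at this; exact this
  have hucont : ContinuousOn u (Set.Icc 0 L) := by
    refine ContinuousOn.congr
      (f := fun x => x * C - x * G x + H x) ?_ (fun x hx => key x hx)
    exact ((continuousOn_id.mul continuousOn_const).sub
      (continuousOn_id.mul hGcont)).add hHcont
  have hu' : ∀ x ∈ Set.Ioo (0:ℝ) L, HasDerivAt u (w x) x := by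
    intro x hx
    have h1 : HasDerivAt (fun y => y * C - y * G y + H y)
        (1 * C - (1 * G x + x * f x) + x * f x) x :=
      (((hasDerivAt_id x).mul_const C).sub ((hasDerivAt_id x).mul (hG' x hx))).add (hH' x hx)
    have h2 : HasDerivAt (fun y => y * C - y * G y + H y) (w x) x := by
      convert h1 using 1; simp [hwdef]; ring
    refine h2.congr_of_eventuallyEq ?_
    filter_upwards [Icc_mem_nhds hx.1 hx.2] with y hy
    exact key y hy
  -- D and ubar on the pieces
  have hDw : ∀ x ∈ Set.Ioc (0:ℝ) ξ, D x = w x := by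
    intro x hx
    rcases lt_or_eq_of_le hx.2 with h | h
    · rw [hD, if_pos h]
      exact (hu' x ⟨hx.1, h.trans hξL⟩).deriv
    · subst h; rw [hD, if_neg (lt_irrefl x), hwξ]
  have hD0 : ∀ x, ξ ≤ x → D x = 0 := fun x hx => by rw [hD, if_neg (not_lt.mpr hx)]
  have hubarU : ∀ x ∈ Set.Icc (0:ℝ) ξ, ubar x = u x := by
    intro x hx
    rcases lt_or_eq_of_le hx.2 with h | h
    · rw [hubar, if_pos h]
    · subst h; rw [hubar, if_neg (lt_irrefl x), huξ]
  have hubar0 : ∀ x, ξ ≤ x → ubar x = 0 := fun x hx => by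
    rw [hubar, if_neg (not_lt.mpr hx)]
  -- v facts
  have hvcont : ContinuousOn v (Set.Icc 0 L) := fun x hx => (hv x hx).continuousWithinAt
  have hv'at : ∀ x ∈ Set.Ioo (0:ℝ) L, HasDerivAt v (v' x) x := fun x hx =>
    (hv x (Set.Ioo_subset_Icc_self hx)).hasDerivAt (Icc_mem_nhds hx.1 hx.2)
  have sub1 : Set.Icc (0:ℝ) ξ ⊆ Set.Icc 0 L := Set.Icc_subset_Icc le_rfl hξL.le
  have sub2 : Set.Icc ξ L ⊆ Set.Icc (0:ℝ) L := Set.Icc_subset_Icc hξ0.le le_rfl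
  have subo : Set.Ioo (0:ℝ) ξ ⊆ Set.Ioo 0 L := Set.Ioo_subset_Ioo le_rfl hξL.le
  -- integrabilities on [0,ξ]
  have Iwv' : IntervalIntegrable (fun x => w x * v' x) MeasureTheory.volume 0 ξ :=
    ((hwcont.mono sub1).mul (hv'.mono sub1)).intervalIntegrable_of_Icc hξ0.le
  have Iww : IntervalIntegrable (fun x => w x * w x) MeasureTheory.volume 0 ξ :=
    ((hwcont.mono sub1).mul (hwcont.mono sub1)).intervalIntegrable_of_Icc hξ0.le
  have Ifv : IntervalIntegrable (fun x => f x * v x) MeasureTheory.volume 0 ξ :=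
    ((hf.mono sub1).mul (hvcont.mono sub1)).intervalIntegrable_of_Icc hξ0.le
  have Ifu : IntervalIntegrable (fun x => f x * u x) MeasureTheory.volume 0 ξ :=
    ((hf.mono sub1).mul (hucont.mono sub1)).intervalIntegrable_of_Icc hξ0.le
  have Iwvw : IntervalIntegrable (fun x => w x * (v' x - w x)) MeasureTheory.volume 0 ξ :=
    ((hwcont.mono sub1).mul ((hv'.mono sub1).sub (hwcont.mono sub1))).intervalIntegrable_of_Icc
      hξ0.le
  have Ifvu : IntervalIntegrable (fun x => f x * (v x - u x)) MeasureTheory.volume 0 ξ :=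
    ((hf.mono sub1).mul ((hvcont.mono sub1).sub (hucont.mono sub1))).intervalIntegrable_of_Icc
      hξ0.le
  have IfvR : IntervalIntegrable (fun x => f x * v x) MeasureTheory.volume ξ L :=
    ((hf.mono sub2).mul (hvcont.mono sub2)).intervalIntegrable_of_Icc hξL.le
  -- FTC identities
  have FTC1 : (∫ x in (0:ℝ)..ξ, (w x * v' x - f x * v x))
      = w ξ * v ξ - w 0 * v 0 := by
    refine intervalIntegral.integral_eq_sub_of_hasDeriv_right_of_le hξ0.le
      ((hwcont.mono sub1).mul (hvcont.mono sub1)) ?_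
      ((Iwv'.sub Ifv))
    intro x hx
    have hx' : x ∈ Set.Ioo (0:ℝ) L := subo hx
    have h := ((hw' x hx').mul (hv'at x hx')).hasDerivWithinAt (s := Set.Ioi x)
    convert h using 1; ring
  have FTC2 : (∫ x in (0:ℝ)..ξ, (w x * w x - f x * u x))
      = w ξ * u ξ - w 0 * u 0 := by
    refine intervalIntegral.integral_eq_sub_of_hasDeriv_right_of_le hξ0.le
      ((hwcont.mono sub1).mul (hucont.mono sub1)) ?_
      ((Iww.sub Ifu))
    intro x hx
    have hx' : x ∈ Set.Ioo (0:ℝ) L := subo hx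
    have h := ((hw' x hx').mul (hu' x hx')).hasDerivWithinAt (s := Set.Ioi x)
    convert h using 1; ring
  have E1 : (∫ x in (0:ℝ)..ξ, w x * v' x) = ∫ x in (0:ℝ)..ξ, f x * v x := by
    rw [intervalIntegral.integral_sub Iwv' Ifv] at FTC1
    rw [hwξ, hv0] at FTC1
    linarith
  have E2 : (∫ x in (0:ℝ)..ξ, w x * w x) = ∫ x in (0:ℝ)..ξ, f x * u x := by
    rw [intervalIntegral.integral_sub Iww Ifu] at FTC2
    rw [hwξ, hu0] at FTC2
    linarith
  -- LHS
  have hFint1 : IntervalIntegrable (fun x => D x * (v' x - D x)) MeasureTheory.volume 0 ξ := by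
    rw [intervalIntegrable_iff_integrableOn_Ioc_of_le hξ0.le]
    refine MeasureTheory.IntegrableOn.congr_fun
      ((intervalIntegrable_iff_integrableOn_Ioc_of_le hξ0.le).1 Iwvw) ?_ measurableSet_Ioc
    intro x hx
    simp only [hDw x hx]
  have hFint2 : IntervalIntegrable (fun x => D x * (v' x - D x)) MeasureTheory.volume ξ L := by
    rw [intervalIntegrable_iff_integrableOn_Ioc_of_le hξL.le]
    refine MeasureTheory.IntegrableOn.congr_fun
      (MeasureTheory.integrableOn_zero) ?_ measurableSet_Ioc
    intro x hx
    simp [hD0 x hx.1.le]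
  have ELHS : (∫ x in (0:ℝ)..L, D x * (v' x - D x))
      = (∫ x in (0:ℝ)..ξ, f x * v x) - ∫ x in (0:ℝ)..ξ, f x * u x := by
    rw [← intervalIntegral.integral_add_adjacent_intervals hFint1 hFint2]
    have eL : (∫ x in (0:ℝ)..ξ, D x * (v' x - D x))
        = ∫ x in (0:ℝ)..ξ, w x * (v' x - w x) := by
      refine intervalIntegral.integral_congr_ae (MeasureTheory.ae_of_all _ ?_)
      intro x hx
      have hx' : x ∈ Set.Ioc (0:ℝ) ξ := by rwa [Set.uIoc_of_le hξ0.le] at hx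
      rw [hDw x hx']
    have eR : (∫ x in ξ..L, D x * (v' x - D x)) = 0 := by
      have : (∫ x in ξ..L, D x * (v' x - D x)) = ∫ x in ξ..L, (0:ℝ) := by
        refine intervalIntegral.integral_congr ?_
        intro x hx
        rw [Set.uIcc_of_le hξL.le] at hx
        simp [hD0 x hx.1]
      rw [this, intervalIntegral.integral_zero]
    rw [eL, eR, add_zero]
    have : (fun x => w x * (v' x - w x)) = fun x => w x * v' x - w x * w x := by
      funext x; ring
    rw [this, intervalIntegral.integral_sub Iwv' Iww, E1, E2]
  -- RHS
  have hRint1 : IntervalIntegrable (fun x => f x * (v x - ubar x)) MeasureTheory.volume 0 ξ := by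
    rw [intervalIntegrable_iff_integrableOn_Ioc_of_le hξ0.le]
    refine MeasureTheory.IntegrableOn.congr_fun
      ((intervalIntegrable_iff_integrableOn_Ioc_of_le hξ0.le).1 Ifvu) ?_ measurableSet_Ioc
    intro x hx
    simp only [hubarU x (Set.Ioc_subset_Icc_self hx)]
  have hRint2 : IntervalIntegrable (fun x => f x * (v x - ubar x)) MeasureTheory.volume ξ L := by
    rw [intervalIntegrable_iff_integrableOn_Ioc_of_le hξL.le]
    refine MeasureTheory.IntegrableOn.congr_fun
      ((intervalIntegrable_iff_integrableOn_Ioc_of_le hξL.le).1 IfvR) ?_ measurableSet_Ioc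
    intro x hx
    simp [hubar0 x hx.1.le]
  have ERHS : (∫ x in (0:ℝ)..L, f x * (v x - ubar x))
      = ((∫ x in (0:ℝ)..ξ, f x * v x) - ∫ x in (0:ℝ)..ξ, f x * u x)
        + ∫ x in ξ..L, f x * v x := by
    rw [← intervalIntegral.integral_add_adjacent_intervals hRint1 hRint2]
    have eL : (∫ x in (0:ℝ)..ξ, f x * (v x - ubar x))
        = ∫ x in (0:ℝ)..ξ, f x * (v x - u x) := by
      refine intervalIntegral.integral_congr ?_
      intro x hx
      rw [Set.uIcc_of_le hξ0.le] at hx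
      simp only [hubarU x hx]
    have eR : (∫ x in ξ..L, f x * (v x - ubar x)) = ∫ x in ξ..L, f x * v x := by
      refine intervalIntegral.integral_congr ?_
      intro x hx
      rw [Set.uIcc_of_le hξL.le] at hx
      simp only [hubar0 x hx.1, sub_zero]
    rw [eL, eR]
    have : (fun x => f x * (v x - u x)) = fun x => f x * v x - f x * u x := by
      funext x; ring
    rw [this, intervalIntegral.integral_sub Ifv Ifu]
  -- the tail is nonpositive
  have tail : (∫ x in ξ..L, f x * v x) ≤ 0 := by
    have h0 : (0:ℝ) ≤ ∫ x in ξ..L, -(f x * v x) := by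
      refine intervalIntegral.integral_nonneg hξL.le ?_
      intro x hx
      have hx0 : (0:ℝ) ≤ x := le_trans hξ0.le hx.1
      have hfx : f x < 0 := hneg x (lt_of_lt_of_le hξhalf hx.1) hx.2
      have hvx : 0 ≤ v x := hvpos x ⟨hx0, hx.2⟩
      nlinarith
    rw [intervalIntegral.integral_neg] at h0
    linarith
  rw [ge_iff_le, ERHS, ELHS]
  linarith
end
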